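/- For w ≥ 3, the rate-1/w convolutional code over F₂ with generator matrix g_w(z) = [1, 1+z, 1+z+z², …, 1+z+⋯+z^{w-1}] has free distance exactly 2w. -/

import Mathlib

open Polynomial Finset

/-- v_r(z) = 1 + z + ⋯ + z^{r-1} over F₂. -/
noncomputable def vpoly (r : ℕ) : Polynomial (ZMod 2) :=
  ∑ i ∈ Finset.range r, Polynomial.X ^ i

/-- For w ≥ 3, the rate-1/w convolutional code with generator [v₁, …, v_w] over F₂ has
free distance exactly 2w. -/
lemma vpoly_coeff (r k : ℕ) : (vpoly r).coeff k = if k < r then 1 else 0 := by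
  simp [vpoly, Polynomial.finset_sum_coeff, Polynomial.coeff_X_pow, Finset.sum_ite_eq,
    Finset.mem_range, eq_comm]

lemma vpoly_ne_zero {r : ℕ} (hr : 1 ≤ r) : vpoly r ≠ 0 := by
  intro h
  have := vpoly_coeff r 0
  rw [h] at this
  rw [if_pos (by omega : 0 < r)] at this
  exact one_ne_zero this.symm

lemma vpoly_trailing {r : ℕ} (hr : 1 ≤ r) : (vpoly r).natTrailingDegree = 0 := by
  have h0 : (vpoly r).coeff 0 ≠ 0 := by
    rw [vpoly_coeff, if_pos (by omega : 0 < r)]; exact one_ne_zero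
  exact Nat.le_zero.mp (Polynomial.natTrailingDegree_le_of_ne_zero h0)

lemma zmod2_eq_one {a : ZMod 2} (h : a ≠ 0) : a = 1 := by
  revert h
  revert a
  decide

lemma card_two_le {r : ℕ} (hr : 1 ≤ r) {u : Polynomial (ZMod 2)} (hu : u ≠ 0)
    (ht : u.natTrailingDegree < u.natDegree) : 2 ≤ ((vpoly r) * u).support.card := by
  have hv := vpoly_ne_zero hr
  have hp : vpoly r * u ≠ 0 := mul_ne_zero hv hu
  have h1 : (vpoly r * u).natTrailingDegree = u.natTrailingDegree := by
    rw [Polynomial.natTrailingDegree_mul hv hu, vpoly_trailing hr, zero_add]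
  have h2 : (vpoly r * u).natDegree = (vpoly r).natDegree + u.natDegree :=
    Polynomial.natDegree_mul hv hu
  apply Finset.one_lt_card.2
  refine ⟨_, Polynomial.natTrailingDegree_mem_support_of_nonzero hp,
    _, Polynomial.natDegree_mem_support_of_nonzero hp, ?_⟩
  rw [h1, h2]; omega

lemma card_monomial {r d : ℕ} (hr : 1 ≤ r) :
    ((vpoly r) * Polynomial.X ^ d).support.card = r := by
  have hsupp : ((vpoly r) * Polynomial.X ^ d).support = (Finset.range r).image (· + d) := by
    ext n
    simp only [Polynomial.mem_support_iff, Polynomial.coeff_mul_X_pow', vpoly_coeff,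
      Finset.mem_image, Finset.mem_range]
    constructor
    · intro h
      by_cases hd : d ≤ n
      · rw [if_pos hd] at h
        by_cases hlt : n - d < r
        · exact ⟨n - d, hlt, by omega⟩
        · rw [if_neg hlt] at h; exact absurd rfl h
      · rw [if_neg hd] at h; exact absurd rfl h
    · rintro ⟨i, hi, rfl⟩
      rw [if_pos (by omega : d ≤ i + d), if_pos (by omega : i + d - d < r)]
      exact one_ne_zero
  rw [hsupp, Finset.card_image_of_injective _ (add_left_injective d), Finset.card_range]

lemma vpoly_mul_one_add_X (r : ℕ) :
    (vpoly r) * (1 + Polynomial.X) = Polynomial.X ^ r + 1 := by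
  have h : (1 + Polynomial.X : Polynomial (ZMod 2)) = Polynomial.X - 1 := by
    rw [sub_eq_add_neg, CharTwo.neg_eq, add_comm]
  rw [h, vpoly, geom_sum_mul, sub_eq_add_neg, CharTwo.neg_eq]

lemma support_X_pow_add_one {r : ℕ} (hr : 1 ≤ r) :
    (Polynomial.X ^ r + 1 : Polynomial (ZMod 2)).support = {r, 0} := by
  ext n
  simp only [Polynomial.mem_support_iff, Polynomial.coeff_add, Polynomial.coeff_X_pow,
    Polynomial.coeff_one, Finset.mem_insert, Finset.mem_singleton]
  rcases eq_or_ne n r with rfl | hnr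
  · rw [if_neg (by omega : ¬ n = 0)]
    simp
  · rcases eq_or_ne n 0 with rfl | hn0
    · simp [hnr]
    · simp [hnr, hn0]

theorem free_distance_rate_inv_w (w : ℕ) (hw : 3 ≤ w) :
    (∀ u : Polynomial (ZMod 2), u ≠ 0 →
        2 * w ≤ ∑ r ∈ Finset.Icc 1 w, ((vpoly r) * u).support.card)
    ∧ (∃ u : Polynomial (ZMod 2), u ≠ 0 ∧
        ∑ r ∈ Finset.Icc 1 w, ((vpoly r) * u).support.card = 2 * w) := by
  constructor
  · intro u hu
    rcases lt_or_eq_of_le u.natTrailingDegree_le_natDegree with ht | ht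
    · calc 2 * w = ∑ _r ∈ Finset.Icc 1 w, 2 := by
            rw [Finset.sum_const, Nat.card_Icc, smul_eq_mul]; ring_nf; omega
        _ ≤ ∑ r ∈ Finset.Icc 1 w, ((vpoly r) * u).support.card := by
            apply Finset.sum_le_sum
            intro r hr
            exact card_two_le (Finset.mem_Icc.mp hr).1 hu ht
    · -- u is a monomial X^d
      set d := u.natDegree with hd
      have hux : u = Polynomial.X ^ d := by
        ext n
        rcases lt_trichotomy n d with h | rfl | h
        · rw [Polynomial.coeff_eq_zero_of_lt_natTrailingDegree (by omega),
            Polynomial.coeff_X_pow, if_neg (by omega)]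
        · rw [Polynomial.coeff_X_pow, if_pos rfl]
          have hl := Polynomial.leadingCoeff_ne_zero.mpr hu
          rw [Polynomial.leadingCoeff] at hl
          exact zmod2_eq_one hl
        · rw [Polynomial.coeff_eq_zero_of_natDegree_lt (by omega),
            Polynomial.coeff_X_pow, if_neg (by omega)]
      rw [hux]
      have hsum : ∑ r ∈ Finset.Icc 1 w, ((vpoly r) * Polynomial.X ^ d).support.card
          = ∑ r ∈ Finset.Icc 1 w, r :=
        Finset.sum_congr rfl fun r hr => card_monomial (Finset.mem_Icc.mp hr).1
      rw [hsum]
      have h1 : Finset.range (w + 1) = insert 0 (Finset.Icc 1 w) := by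
        ext n; simp [Finset.mem_Icc]; omega
      have h2 := Finset.sum_range_id_mul_two (w + 1)
      rw [h1, Finset.sum_insert (by simp)] at h2
      simp only [Nat.add_sub_cancel, zero_add] at h2
      nlinarith [h2]
  · refine ⟨1 + Polynomial.X, ?_, ?_⟩
    · intro h
      have := congrArg (fun p => Polynomial.coeff p 0) h
      simp at this
    · have : ∀ r ∈ Finset.Icc 1 w, ((vpoly r) * (1 + Polynomial.X)).support.card = 2 := by
        intro r hr
        have hr1 := (Finset.mem_Icc.mp hr).1
        rw [vpoly_mul_one_add_X, support_X_pow_add_one hr1,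
          Finset.card_insert_of_notMem (by simpa using (by omega : r ≠ 0)),
          Finset.card_singleton]
      rw [Finset.sum_congr rfl this, Finset.sum_const, Nat.card_Icc, smul_eq_mul]
      omega
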